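/- Let n ≥ 2 and r ≥ 2. Then the palindromic width of the group Ñ_{n,r} with respect to its generating family Y = (y_1, …, y_n) satisfies n ≤ pw(Ñ_{n,r}, Y) ≤ 2n. -/

import Mathlib

/-- The element of `G` represented by a word in the alphabet `X^{±1}`:
a letter `(i, true)` stands for `X i` and `(i, false)` for `(X i)⁻¹`. -/
def evalWord {G : Type*} {n : ℕ} [Group G] (X : Fin n → G) (w : List (Fin n × Bool)) : G :=
  (w.map fun l => if l.2 then X l.1 else (X l.1)⁻¹).prod

/-- `g` is a palindrome with respect to the generating family `X` if it is represented by
some word whose sequence of letters equals its reverse. -/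
def IsPalindrome {G : Type*} {n : ℕ} [Group G] (X : Fin n → G) (g : G) : Prop :=
  ∃ w : List (Fin n × Bool), w.reverse = w ∧ evalWord X w = g

/-- `g` is a product of `k` palindromes with respect to `X`. -/
def IsPalProd {G : Type*} {n : ℕ} [Group G] (X : Fin n → G) (k : ℕ) (g : G) : Prop :=
  ∃ f : Fin k → G, (∀ i, IsPalindrome X (f i)) ∧ (List.ofFn f).prod = g

/-- The palindromic length of `g` with respect to `X`, valued in `ℕ∞`. -/
noncomputable def palLength {G : Type*} {n : ℕ} [Group G] (X : Fin n → G) (g : G) : ℕ∞ :=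
  sInf {k : ℕ∞ | ∃ m : ℕ, k = (m : ℕ∞) ∧ IsPalProd X m g}

/-- The palindromic width of `G` with respect to `X`, valued in `ℕ∞`. -/
noncomputable def palWidth {G : Type*} {n : ℕ} [Group G] (X : Fin n → G) : ℕ∞ :=
  ⨆ g : G, palLength X g

/-- The free nilpotent group `N_{n,r}` of rank `n` and step `r`: the quotient of the free
group on `n` generators by `γ_{r+1} = lowerCentralSeries _ r` (indices: `γ_1` is the
whole group and corresponds to index `0`). -/
abbrev FreeNilpotent (n r : ℕ) :=
  FreeGroup (Fin n) ⧸ (⊤ : Subgroup (FreeGroup (Fin n))).lowerCentralSeries r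

/-- The images `x_1, …, x_n` of the free basis in `N_{n,r}`. -/
def nilGen (n r : ℕ) (i : Fin n) : FreeNilpotent n r :=
  QuotientGroup.mk (FreeGroup.of i)

/-- `Ñ_{n,r}`: the quotient of `N_{n,r}` by the normal closure of the squares of the
generators. -/
abbrev TildeNil (n r : ℕ) :=
  FreeNilpotent n r ⧸ Subgroup.normalClosure (Set.range fun i : Fin n => nilGen n r i ^ 2)

/-- The generating family `y_1, …, y_n` of `Ñ_{n,r}`. -/
def tnGen (n r : ℕ) (i : Fin n) : TildeNil n r := QuotientGroup.mk (nilGen n r i)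

open scoped commutatorElement

/-! ### Auxiliary list lemmas -/

theorem pal_decomp {α : Type*} : ∀ (k : ℕ), ∀ (w : List α), w.length ≤ k → w.reverse = w →
    (∃ u : List α, w = u ++ u.reverse) ∨ (∃ u : List α, ∃ l : α, w = u ++ l :: u.reverse) := by
  intro k
  induction k with
  | zero =>
    intro w hw _
    left; exact ⟨[], by simpa using List.length_eq_zero_iff.mp (Nat.le_zero.mp hw)⟩
  | succ k ih =>
    intro w hw hpal
    match w with
    | [] => exact Or.inl ⟨[], rfl⟩
    | a :: t =>
      rcases List.eq_nil_or_concat t with rfl | ⟨s, b, rfl⟩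
      all_goals simp -failIfUnchanged only [List.concat_eq_append] at *
      · exact Or.inr ⟨[], a, rfl⟩
      · have key : (a :: (s ++ [b])).reverse = b :: (s.reverse ++ [a]) := by simp
        rw [key] at hpal
        obtain ⟨hba, hrest⟩ : b = a ∧ s.reverse ++ [a] = s ++ [b] := by
          have h1 := List.head_eq_of_cons_eq hpal
          have h2 := List.tail_eq_of_cons_eq hpal
          exact ⟨h1, h2⟩
        subst hba
        have hs : s.reverse = s := by
          exact List.append_cancel_right hrest
        have hlen : s.length ≤ k := by
          have : (b :: (s ++ [b])).length ≤ k + 1 := hw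
          simp at this; omega
        rcases ih s hlen hs with ⟨u, hu⟩ | ⟨u, l, hu⟩
        · left; exact ⟨b :: u, by simp [hu, hs]⟩
        · right; refine ⟨b :: u, l, ?_⟩
          simp [hu]

section OfFnProd

variable {G : Type*} [Group G]

theorem ofFn_prod_mul_central : ∀ {m : ℕ} (a c : Fin m → G),
    (∀ i q, Commute (c i) q) →
    (List.ofFn a).prod * (List.ofFn c).prod = (List.ofFn fun i => a i * c i).prod := by
  intro m
  induction m with
  | zero => intro a c _; simp
  | succ m ih =>
    intro a c hc
    simp only [List.ofFn_succ, List.prod_cons]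
    rw [← ih (fun i => a i.succ) (fun i => c i.succ) (fun i q => hc i.succ q)]
    have h0 : ∀ q : G, c 0 * q = q * c 0 := fun q => (hc 0 q).eq
    calc a 0 * (List.ofFn fun i => a i.succ).prod * (c 0 * (List.ofFn fun i => c i.succ).prod)
        = a 0 * ((List.ofFn fun i => a i.succ).prod * c 0) * (List.ofFn fun i => c i.succ).prod := by
          group
      _ = a 0 * (c 0 * (List.ofFn fun i => a i.succ).prod) * (List.ofFn fun i => c i.succ).prod := by
          rw [h0]
      _ = a 0 * c 0 * ((List.ofFn fun i => a i.succ).prod * (List.ofFn fun i => c i.succ).prod) := by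
          group

theorem ofFn_prod_inv_central : ∀ {m : ℕ} (c : Fin m → G),
    (∀ i q, Commute (c i) q) →
    ((List.ofFn c).prod)⁻¹ = (List.ofFn fun i => (c i)⁻¹).prod := by
  intro m
  induction m with
  | zero => intro c _; simp
  | succ m ih =>
    intro c hc
    simp only [List.ofFn_succ, List.prod_cons, mul_inv_rev]
    rw [ih (fun i => c i.succ) (fun i q => hc i.succ q)]
    exact ((hc 0 _).inv_left.eq).symm

theorem ofFn_prod_eq_single : ∀ {m : ℕ} (f : Fin m → G) (j : Fin m),
    (∀ i, i ≠ j → f i = 1) → (List.ofFn f).prod = f j := by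
  intro m
  induction m with
  | zero => intro f j; exact j.elim0
  | succ m ih =>
    intro f j hf
    simp only [List.ofFn_succ, List.prod_cons]
    rcases Fin.eq_zero_or_eq_succ j with rfl | ⟨j', rfl⟩
    · have h1 : ∀ i : Fin m, f i.succ = 1 := fun i => hf i.succ (Fin.succ_ne_zero i)
      have h2 : (List.ofFn fun i => f (Fin.succ i)).prod = 1 :=
        List.prod_eq_one
          (by intro x hx; rw [List.mem_ofFn] at hx; obtain ⟨i, rfl⟩ := hx; exact h1 i)
      rw [h2, mul_one]
    · rw [hf 0 (Ne.symm (Fin.succ_ne_zero j')), one_mul]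
      exact ih (fun i => f i.succ) j' (fun i hi => hf i.succ (by simpa using hi))

end OfFnProd

/-! ### Commutator calculus modulo the lower central series -/

theorem conj_central_left {Q : Type*} [Group Q] {h : Q} (hc : ∀ q, Commute h q) (b : Q) :
    b * h * b⁻¹ = h := by
  rw [show b * h = h * b from ((hc b).eq).symm]
  group

theorem conj_central_right {Q : Type*} [Group Q] {h : Q} (hc : ∀ q, Commute h q) (b : Q) :
    b⁻¹ * h * b = h := by
  rw [show b⁻¹ * h = h * b⁻¹ from ((hc b⁻¹).eq).symm]
  group

private theorem comm_inv_right {G : Type*} [Group G] (a b : G) :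
    ⁅a, b⁻¹⁆ = b⁻¹ * ⁅a, b⁆⁻¹ * b := by
  simp only [commutatorElement_def]; group

private theorem comm_mul_right {G : Type*} [Group G] (a b c : G) :
    ⁅a, b * c⁆ = ⁅a, b⁆ * (b * ⁅a, c⁆ * b⁻¹) := by
  simp only [commutatorElement_def]; group

/-- Elements of `lowerCentralSeries G c` are central in `G ⧸ lowerCentralSeries G (c+1)`. -/
theorem central_mod {G : Type*} [Group G] (c : ℕ) {h : G} (hh : h ∈ (⊤ : Subgroup G).lowerCentralSeries c)
    (q : G ⧸ (⊤ : Subgroup G).lowerCentralSeries (c + 1)) :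
    Commute ((QuotientGroup.mk' ((⊤ : Subgroup G).lowerCentralSeries (c + 1))) h) q := by
  induction q using QuotientGroup.induction_on with
  | H g =>
    have hmem : ⁅h, g⁆ ∈ (⊤ : Subgroup G).lowerCentralSeries (c + 1) := by
      rw [Subgroup.lowerCentralSeries_succ]
      exact Subgroup.commutator_mem_commutator hh (Subgroup.mem_top g)
    have h1 : (QuotientGroup.mk' ((⊤ : Subgroup G).lowerCentralSeries (c + 1))) ⁅h, g⁆ = 1 := by
      rw [QuotientGroup.mk'_apply]
      exact (QuotientGroup.eq_one_iff _).mpr hmem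
    rw [map_commutatorElement] at h1
    exact commutatorElement_eq_one_iff_mul_comm.mp h1

section CommExpr

variable {G : Type*} [Group G] {n : ℕ}

/-- Every element of `γ_{d+1}` is, modulo `γ_{d+2}`, a product `∏ ⁅x i, v i⁆` with
`v i ∈ γ_d`. -/
theorem comm_mod_expr (x : Fin n → G) (hx : Subgroup.closure (Set.range x) = ⊤) (d : ℕ) :
    ∀ z ∈ (⊤ : Subgroup G).lowerCentralSeries (d + 1), ∃ v : Fin n → G,
      (∀ i, v i ∈ (⊤ : Subgroup G).lowerCentralSeries d) ∧
      (QuotientGroup.mk' ((⊤ : Subgroup G).lowerCentralSeries (d + 2))) z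
        = (QuotientGroup.mk' ((⊤ : Subgroup G).lowerCentralSeries (d + 2)))
            ((List.ofFn fun i => ⁅x i, v i⁆).prod) := by
  set L := (⊤ : Subgroup G).lowerCentralSeries with hL
  set π := QuotientGroup.mk' (L (d + 2)) with hπ
  have hxv : ∀ (i : Fin n) (v : G), v ∈ L d → ⁅x i, v⁆ ∈ L (d + 1) := by
    intro i v hv
    have : ⁅v, x i⁆ ∈ L (d + 1) := by
      rw [hL, Subgroup.lowerCentralSeries_succ]
      exact Subgroup.commutator_mem_commutator hv (Subgroup.mem_top _)
    simpa [commutatorElement_inv] using (inv_mem this)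
  have hcent : ∀ {h : G}, h ∈ L (d + 1) → ∀ q, Commute (π h) q := by
    intro h hh q
    exact central_mod (d + 1) hh q
  have hπinv : ∀ (i : Fin n) (v : G), v ∈ L d → π ⁅x i, v⁻¹⁆ = (π ⁅x i, v⁆)⁻¹ := by
    intro i v hv
    rw [comm_inv_right, map_mul, map_mul, map_inv, map_inv]
    exact conj_central_right (fun q => (hcent (hxv i v hv) q).inv_left) (π v)
  have hπmul : ∀ (i : Fin n) (u v : G), v ∈ L d → π ⁅x i, u * v⁆ = π ⁅x i, u⁆ * π ⁅x i, v⁆ := by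
    intro i u v hv
    rw [comm_mul_right, map_mul, map_mul, map_mul, map_inv,
      conj_central_left (fun q => hcent (hxv i v hv) q) (π u)]
  set ExprQ : (G ⧸ L (d + 2)) → Prop := fun q => ∃ v : Fin n → G,
      (∀ i, v i ∈ L d) ∧ q = π ((List.ofFn fun i => ⁅x i, v i⁆).prod) with hEQ
  have hπprod : ∀ v : Fin n → G, π ((List.ofFn fun i => ⁅x i, v i⁆).prod)
      = (List.ofFn fun i => π ⁅x i, v i⁆).prod := by
    intro v
    rw [map_list_prod, List.map_ofFn]
    rfl
  have ExprQ_mul : ∀ q₁ q₂, ExprQ q₁ → ExprQ q₂ → ExprQ (q₁ * q₂) := by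
    rintro q₁ q₂ ⟨v, hv, rfl⟩ ⟨w, hw, rfl⟩
    refine ⟨fun i => v i * w i, fun i => mul_mem (hv i) (hw i), ?_⟩
    rw [hπprod, hπprod, hπprod,
      ofFn_prod_mul_central _ _ (fun i q => hcent (hxv i (w i) (hw i)) q)]
    exact congrArg List.prod (congrArg List.ofFn (funext fun i =>
      (hπmul i (v i) (w i) (hw i)).symm))
  have ExprQ_inv : ∀ q, ExprQ q → ExprQ q⁻¹ := by
    rintro q ⟨v, hv, rfl⟩
    refine ⟨fun i => (v i)⁻¹, fun i => inv_mem (hv i), ?_⟩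
    rw [hπprod, hπprod, ofFn_prod_inv_central _ (fun i q => hcent (hxv i (v i) (hv i)) q)]
    exact congrArg List.prod (congrArg List.ofFn (funext fun i =>
      (hπinv i (v i) (hv i)).symm))
  have ExprQ_one : ExprQ 1 := by
    refine ⟨fun _ => 1, fun i => one_mem _, ?_⟩
    rw [hπprod]
    symm
    refine List.prod_eq_one ?_
    intro q hq
    rw [List.mem_ofFn] at hq
    obtain ⟨i, rfl⟩ := hq
    simp
  have hgen : ∀ (b : G), ∀ a ∈ L d, ExprQ (π ⁅a, b⁆) := by
    intro b
    have hb : b ∈ Subgroup.closure (Set.range x) := hx.symm ▸ Subgroup.mem_top b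
    refine Subgroup.closure_induction (p := fun b _ => ∀ a ∈ L d, ExprQ (π ⁅a, b⁆))
      ?_ ?_ ?_ ?_ hb
    · rintro b' ⟨j, rfl⟩ a ha
      refine ⟨fun i => if i = j then a⁻¹ else 1, ?_, ?_⟩
      · intro i
        dsimp only
        split
        · exact inv_mem ha
        · exact one_mem _
      · have h1 : ⁅a, x j⁆ = ⁅x j, a⁆⁻¹ := (commutatorElement_inv (x j) a).symm
        rw [h1, map_inv, ← hπinv j a ha]
        rw [show π ⁅x j, a⁻¹⁆
            = π ((List.ofFn fun i => ⁅x i, if i = j then a⁻¹ else 1⁆).prod) from ?_]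
        rw [ofFn_prod_eq_single _ j ?_]
        · simp
        · intro i hij
          simp [hij]
    · intro a _
      simp only [commutatorElement_one_right, map_one]
      exact ExprQ_one
    · intro b₁ b₂ _ _ h1 h2 a ha
      have hsplit : π ⁅a, b₁ * b₂⁆ = π ⁅a, b₁⁆ * π ⁅a, b₂⁆ := by
        rw [comm_mul_right, map_mul, map_mul, map_mul, map_inv]
        have hab₂ : ⁅a, b₂⁆ ∈ L (d + 1) := by
          rw [hL, Subgroup.lowerCentralSeries_succ]
          exact Subgroup.commutator_mem_commutator ha (Subgroup.mem_top _)
        rw [conj_central_left (fun q => hcent hab₂ q) (π b₁)]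
      rw [hsplit]
      exact ExprQ_mul _ _ (h1 a ha) (h2 a ha)
    · intro b _ h a ha
      have hflip : π ⁅a, b⁻¹⁆ = (π ⁅a, b⁆)⁻¹ := by
        rw [comm_inv_right, map_mul, map_mul, map_inv, map_inv]
        have hab : ⁅a, b⁆ ∈ L (d + 1) := by
          rw [hL, Subgroup.lowerCentralSeries_succ]
          exact Subgroup.commutator_mem_commutator ha (Subgroup.mem_top _)
        exact conj_central_right (fun q => (hcent hab q).inv_left) (π b)
      rw [hflip]
      exact ExprQ_inv _ (h a ha)
  intro z hz
  have hz' : z ∈ Subgroup.closure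
      {g | ∃ p ∈ (⊤ : Subgroup G).lowerCentralSeries d, ∃ q ∈ (⊤ : Subgroup G), p * q * p⁻¹ * q⁻¹ = g} := by
    exact hz
  have : ExprQ (π z) := by
    refine Subgroup.closure_induction (p := fun z _ => ExprQ (π z)) ?_ ?_ ?_ ?_ hz'
    · rintro g ⟨a, ha, b, -, rfl⟩
      exact hgen b a ha
    · show ExprQ (π (1 : G))
      rw [map_one]; exact ExprQ_one
    · intro z₁ z₂ _ _ h1 h2
      rw [map_mul]; exact ExprQ_mul _ _ h1 h2
    · intro z₁ _ h1
      rw [map_inv]; exact ExprQ_inv _ h1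
  exact this

/-- base case : abelianization -/
theorem abelianization_form (x : Fin n → G) (hx : Subgroup.closure (Set.range x) = ⊤) (g : G) :
    ∃ k : Fin n → ℤ, Abelianization.of g = ∏ i, (Abelianization.of (x i)) ^ (k i) := by
  have hg : g ∈ Subgroup.closure (Set.range x) := hx.symm ▸ Subgroup.mem_top g
  refine Subgroup.closure_induction
    (p := fun g _ => ∃ k : Fin n → ℤ, Abelianization.of g = ∏ i, (Abelianization.of (x i)) ^ (k i))
    ?_ ?_ ?_ ?_ hg
  · rintro g' ⟨j, rfl⟩
    refine ⟨fun i => if i = j then 1 else 0, ?_⟩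
    rw [Finset.prod_eq_single j (fun i _ hij => by simp [hij]) (by simp)]
    simp
  · exact ⟨0, by simp⟩
  · rintro a b _ _ ⟨k1, h1⟩ ⟨k2, h2⟩
    refine ⟨k1 + k2, ?_⟩
    rw [map_mul, h1, h2, ← Finset.prod_mul_distrib]
    exact Finset.prod_congr rfl fun i _ => (zpow_add _ _ _).symm
  · rintro a _ ⟨k, h⟩
    refine ⟨-k, ?_⟩
    rw [map_inv, h, ← Finset.prod_inv_distrib]
    exact Finset.prod_congr rfl fun i _ => (zpow_neg _ _).symm

/-- In a nilpotent group generated by `x 0, …, x (n-1)`, every element has the form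
`∏ i, x i ^ k i * ⁅x i, u i⁆`. -/
theorem nilpotent_prod_form (x : Fin n → G) (hx : Subgroup.closure (Set.range x) = ⊤)
    {r : ℕ} (hr : 1 ≤ r) (hbot : (⊤ : Subgroup G).lowerCentralSeries r = ⊥) (g : G) :
    ∃ (k : Fin n → ℤ) (u : Fin n → G),
      g = (List.ofFn fun i => x i ^ k i * ⁅x i, u i⁆).prod := by
  have main : ∀ c : ℕ, 1 ≤ c → ∀ g : G, ∃ (k : Fin n → ℤ) (u : Fin n → G) (z : G),
      z ∈ (⊤ : Subgroup G).lowerCentralSeries c ∧ g = (List.ofFn fun i => x i ^ k i * ⁅x i, u i⁆).prod * z := by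
    intro c hc
    induction c, hc using Nat.le_induction with
    | base =>
      intro g
      obtain ⟨k, hk⟩ := abelianization_form x hx g
      refine ⟨k, fun _ => 1, ?_, ?_, ?_⟩
      · exact ((List.ofFn fun i => x i ^ k i * ⁅x i, (1 : G)⁆).prod)⁻¹ * g
      · rw [Subgroup.top_lowerCentralSeries_one]
        have hP : Abelianization.of ((List.ofFn fun i => x i ^ k i * ⁅x i, (1 : G)⁆).prod)
            = ∏ i, (Abelianization.of (x i)) ^ (k i) := by
          rw [map_list_prod, List.map_ofFn, List.prod_ofFn]
          refine Finset.prod_congr rfl fun i _ => ?_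
          show Abelianization.of (x i ^ k i * ⁅x i, (1 : G)⁆) = _
          rw [commutatorElement_one_right, mul_one, map_zpow]
        have h1 : Abelianization.of
            (((List.ofFn fun i => x i ^ k i * ⁅x i, (1 : G)⁆).prod)⁻¹ * g) = 1 := by
          rw [map_mul, map_inv, hP, hk]
          group
        exact (QuotientGroup.eq_one_iff _).mp h1
      · group
    | succ d hd ih =>
      intro g
      obtain ⟨k, u, z, hz, rfl⟩ := ih g
      obtain ⟨e, rfl⟩ : ∃ e, d = e + 1 := ⟨d - 1, by omega⟩
      obtain ⟨v, hv, hvz⟩ := comm_mod_expr x hx e z hz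
      set π := QuotientGroup.mk' ((⊤ : Subgroup G).lowerCentralSeries (e + 2)) with hπdef
      set P' : G := (List.ofFn fun i => x i ^ k i * ⁅x i, u i * v i⁆).prod with hP'
      set P : G := (List.ofFn fun i => x i ^ k i * ⁅x i, u i⁆).prod with hP
      have hcent : ∀ i q, Commute (π ⁅x i, v i⁆) q := by
        intro i q
        have hxv : ⁅x i, v i⁆ ∈ (⊤ : Subgroup G).lowerCentralSeries (e + 1) := by
          have : ⁅v i, x i⁆ ∈ (⊤ : Subgroup G).lowerCentralSeries (e + 1) := by
            rw [Subgroup.lowerCentralSeries_succ]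
            exact Subgroup.subset_closure ⟨v i, hv i, x i, Subgroup.mem_top _, rfl⟩
          simpa [commutatorElement_inv] using inv_mem this
        exact central_mod (e + 1) hxv q
      have key : π P' = π P * π ((List.ofFn fun i => ⁅x i, v i⁆).prod) := by
        rw [hP, hP', map_list_prod, map_list_prod, map_list_prod, List.map_ofFn,
          List.map_ofFn, List.map_ofFn]
        rw [show ((⇑π ∘ fun i => x i ^ k i * ⁅x i, u i⁆)) = fun i => π (x i ^ k i * ⁅x i, u i⁆)
          from rfl]
        rw [show ((⇑π ∘ fun i => ⁅x i, v i⁆)) = fun i => π ⁅x i, v i⁆ from rfl]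
        rw [show ((⇑π ∘ fun i => x i ^ k i * ⁅x i, u i * v i⁆))
          = fun i => π (x i ^ k i * ⁅x i, u i * v i⁆) from rfl]
        rw [ofFn_prod_mul_central _ _ hcent]
        refine congrArg List.prod (congrArg List.ofFn (funext fun i => ?_))
        rw [map_mul, map_mul, comm_mul_right, map_mul, map_mul, map_mul, map_inv]
        have hconj : π (u i) * π ⁅x i, v i⁆ * (π (u i))⁻¹ = π ⁅x i, v i⁆ := by
          rw [show π (u i) * π ⁅x i, v i⁆ = π ⁅x i, v i⁆ * π (u i)
            from ((hcent i (π (u i))).symm.eq)]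
          group
        rw [hconj, mul_assoc]
      refine ⟨k, fun i => u i * v i, P'⁻¹ * (P * z), ?_, ?_⟩
      · have hone : π (P'⁻¹ * (P * z)) = 1 := by
          rw [map_mul, map_mul, map_inv, key, hvz]
          group
        rw [QuotientGroup.mk'_apply] at hone
        exact (QuotientGroup.eq_one_iff _).mp hone
      · rw [← hP']
        group
  obtain ⟨k, u, z, hz, rfl⟩ := main r hr g
  rw [hbot] at hz
  rw [Subgroup.mem_bot.mp hz, mul_one]
  exact ⟨k, u, rfl⟩

end CommExpr

/-! ### evalWord and palindrome lemmas -/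

section Words

variable {G : Type*} [Group G] {n : ℕ} (X : Fin n → G)

theorem evalWord_nil : evalWord X [] = 1 := rfl

theorem evalWord_append (w₁ w₂ : List (Fin n × Bool)) :
    evalWord X (w₁ ++ w₂) = evalWord X w₁ * evalWord X w₂ := by
  simp [evalWord]

theorem evalWord_cons (l : Fin n × Bool) (w : List (Fin n × Bool)) :
    evalWord X (l :: w) = (if l.2 then X l.1 else (X l.1)⁻¹) * evalWord X w := by
  simp [evalWord]

theorem map_evalWord {H : Type*} [Group H] (φ : G →* H) (w : List (Fin n × Bool)) :
    φ (evalWord X w) = evalWord (fun i => φ (X i)) w := by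
  induction w with
  | nil => simp [evalWord]
  | cons l t ih =>
    rw [evalWord_cons, evalWord_cons, map_mul, ih]
    congr 1
    split <;> simp

theorem evalWord_reverse_of_inv (hX : ∀ i, (X i)⁻¹ = X i) (w : List (Fin n × Bool)) :
    evalWord X w.reverse = (evalWord X w)⁻¹ := by
  induction w with
  | nil => simp [evalWord]
  | cons l t ih =>
    rw [List.reverse_cons, evalWord_append, ih, evalWord_cons, evalWord_cons, evalWord_nil,
      mul_inv_rev]
    have hl : (if l.2 then X l.1 else (X l.1)⁻¹) = X l.1 := by cases l.2 <;> simp [hX]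
    rw [hl, mul_one, hX]

theorem isPalindrome_one : IsPalindrome X 1 := ⟨[], rfl, rfl⟩

theorem isPalindrome_gen (i : Fin n) : IsPalindrome X (X i) :=
  ⟨[(i, true)], rfl, by simp [evalWord]⟩

theorem isPalindrome_conj (hX : ∀ i, (X i)⁻¹ = X i)
    (u : G) (hu : ∃ w, evalWord X w = u) (i : Fin n) :
    IsPalindrome X (u * X i * u⁻¹) := by
  obtain ⟨w, hw⟩ := hu
  refine ⟨w ++ (i, true) :: w.reverse, by simp, ?_⟩
  rw [show w ++ (i, true) :: w.reverse = w ++ ([(i, true)] ++ w.reverse) by simp]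
  rw [evalWord_append, evalWord_append, evalWord_reverse_of_inv X hX, hw]
  simp [evalWord, mul_assoc]

theorem evalWord_inv_word (w : List (Fin n × Bool)) :
    evalWord X (w.reverse.map fun l => (l.1, !l.2)) = (evalWord X w)⁻¹ := by
  induction w with
  | nil => simp [evalWord]
  | cons l t ih =>
    rw [List.reverse_cons, List.map_append, evalWord_append, ih]
    rcases l with ⟨i, b⟩
    cases b <;> simp [evalWord]

theorem exists_word (hX : Subgroup.closure (Set.range X) = ⊤) (u : G) :
    ∃ w, evalWord X w = u := by
  have hu : u ∈ Subgroup.closure (Set.range X) := hX.symm ▸ Subgroup.mem_top u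
  refine Subgroup.closure_induction (p := fun u _ => ∃ w, evalWord X w = u) ?_ ?_ ?_ ?_ hu
  · rintro g ⟨i, rfl⟩
    exact ⟨[(i, true)], by simp [evalWord]⟩
  · exact ⟨[], rfl⟩
  · rintro a b _ _ ⟨w₁, rfl⟩ ⟨w₂, rfl⟩
    exact ⟨w₁ ++ w₂, evalWord_append X w₁ w₂⟩
  · rintro a _ ⟨w, rfl⟩
    exact ⟨(w.reverse.map fun l => (l.1, !l.2)), evalWord_inv_word X w⟩

theorem isPalProd_append {a b : ℕ} {g h : G} (hg : IsPalProd X a g) (hh : IsPalProd X b h) :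
    IsPalProd X (a + b) (g * h) := by
  obtain ⟨f₁, hp₁, he₁⟩ := hg
  obtain ⟨f₂, hp₂, he₂⟩ := hh
  refine ⟨Fin.append f₁ f₂, ?_, ?_⟩
  · intro i
    rcases Nat.lt_or_ge (i : ℕ) a with h1 | h1
    · have he : Fin.append f₁ f₂ i = f₁ ⟨i, h1⟩ := by
        rw [← Fin.append_left f₁ f₂ ⟨i, h1⟩]
        congr 1
      rw [he]; exact hp₁ _
    · have h2 : ((i : ℕ) - a) < b := by omega
      have he : Fin.append f₁ f₂ i = f₂ ⟨(i : ℕ) - a, h2⟩ := by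
        rw [← Fin.append_right f₁ f₂ ⟨(i : ℕ) - a, h2⟩]
        congr 1
        exact Fin.ext (by simp only [Fin.coe_natAdd]; omega)
      rw [he]; exact hp₂ _
  · rw [List.ofFn_add, List.prod_append]
    have e1 : (fun i => Fin.append f₁ f₂ (Fin.castLE (Nat.le_add_right a b) i)) = f₁ :=
      funext fun i => Fin.append_left _ _ _
    have e2 : (fun i => Fin.append f₁ f₂ (Fin.natAdd a i)) = f₂ :=
      funext fun i => Fin.append_right _ _ _
    rw [e1, e2, he₁, he₂]

theorem isPalProd_blocks : ∀ (m : ℕ) (B : Fin m → G), (∀ i, IsPalProd X 2 (B i)) →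
    IsPalProd X (2 * m) ((List.ofFn B).prod) := by
  intro m
  induction m with
  | zero =>
    intro B _
    exact ⟨Fin.elim0, fun i => i.elim0, by simp⟩
  | succ m ih =>
    intro B hB
    have h1 : IsPalProd X (2 + 2 * m) (B 0 * (List.ofFn fun i => B i.succ).prod) :=
      isPalProd_append X (hB 0) (ih (fun i => B i.succ) (fun i => hB i.succ))
    have e : 2 + 2 * m = 2 * (m + 1) := by omega
    rw [e] at h1
    simpa [List.ofFn_succ] using h1

end Words

/-! ### lower-bound counting -/

section LB

variable {G : Type*} [Group G] {n : ℕ} (X : Fin n → G)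
variable {A : Type*} [CommGroup A]

theorem evalWord_comm_reverse (Y : Fin n → A) (u : List (Fin n × Bool)) :
    evalWord Y u.reverse = evalWord Y u := by
  unfold evalWord
  rw [List.map_reverse, List.prod_reverse]

theorem pal_image (hA : ∀ a : A, a * a = 1) (φ : G →* A) {p : G} (hp : IsPalindrome X p) :
    φ p = 1 ∨ ∃ i, φ p = φ (X i) := by
  obtain ⟨w, hrev, rfl⟩ := hp
  rw [map_evalWord]
  set Y : Fin n → A := fun i => φ (X i) with hY
  have hinv : ∀ i, (Y i)⁻¹ = Y i := fun i => inv_eq_of_mul_eq_one_left (hA _)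
  rcases pal_decomp w.length w le_rfl hrev with ⟨u, rfl⟩ | ⟨u, l, rfl⟩
  · left
    rw [evalWord_append, evalWord_comm_reverse]
    exact hA _
  · right
    refine ⟨l.1, ?_⟩
    rw [show u ++ l :: u.reverse = u ++ ([l] ++ u.reverse) from by simp,
      evalWord_append, evalWord_append, evalWord_comm_reverse]
    have hl : evalWord Y [l] = Y l.1 := by
      rcases l with ⟨i, b⟩
      cases b <;> simp [evalWord, hinv]
    rw [hl]
    calc evalWord Y u * (Y l.1 * evalWord Y u)
        = (evalWord Y u * evalWord Y u) * Y l.1 := by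
          rw [mul_comm (Y l.1) (evalWord Y u)]; group
      _ = Y l.1 := by rw [hA _, one_mul]

theorem count_lb (φ : G →* Multiplicative (Fin n → ZMod 2))
    (hφ : ∀ p : G, IsPalindrome X p → φ p = 1 ∨ ∃ i, φ p = Multiplicative.ofAdd (Pi.single i 1))
    {g₀ : G} (hg : Multiplicative.toAdd (φ g₀) = fun _ => (1 : ZMod 2))
    {m : ℕ} (hm : IsPalProd X m g₀) : n ≤ m := by
  obtain ⟨f, hpal, rfl⟩ := hm
  set V : Fin m → (Fin n → ZMod 2) := fun j => Multiplicative.toAdd (φ (f j)) with hV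
  have hsum : ∑ j, V j = fun _ => (1 : ZMod 2) := by
    rw [← hg, map_list_prod, List.map_ofFn]
    have h2 : (List.ofFn (⇑φ ∘ f)).prod = ∏ j, φ (f j) := List.prod_ofFn
    rw [h2, toAdd_prod]
  have hVj : ∀ j, V j = 0 ∨ ∃ i, V j = Pi.single i 1 := by
    intro j
    rcases hφ (f j) (hpal j) with h | ⟨i, h⟩
    · left; rw [hV]; simp [h]
    · right; exact ⟨i, by rw [hV]; simp [h]⟩
  have hex : ∀ i : Fin n, ∃ j, V j i ≠ 0 := by
    intro i
    by_contra hc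
    push_neg at hc
    have h0 : (∑ j, V j) i = 0 := by
      rw [Finset.sum_apply]
      exact Finset.sum_eq_zero fun j _ => hc j
    rw [hsum] at h0
    exact (by decide : (1 : ZMod 2) ≠ 0) h0
  choose J hJ using hex
  have hinj : Function.Injective J := by
    intro i₁ i₂ hJeq
    rcases hVj (J i₁) with h | ⟨i', h⟩
    · exact absurd (by rw [h]; rfl) (hJ i₁)
    · have h1 : i₁ = i' := by
        by_contra hne
        exact (hJ i₁) (by rw [h, Pi.single_eq_of_ne hne])
      have h2 : i₂ = i' := by
        by_contra hne
        exact (hJ i₂) (by rw [← hJeq, h, Pi.single_eq_of_ne hne])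
      rw [h1, h2]
  simpa using Fintype.card_le_of_injective J hinj

end LB

/-! ### facts about `TildeNil` -/

theorem lcs_succ_comm {G : Type*} [Group G] (c : ℕ) :
    (⊤ : Subgroup G).lowerCentralSeries (c + 1) = ⁅(⊤ : Subgroup G).lowerCentralSeries c, (⊤ : Subgroup G)⁆ := rfl

theorem lcs_map_surjective {G H : Type*} [Group G] [Group H] (f : G →* H)
    (hf : Function.Surjective f) (c : ℕ) :
    Subgroup.map f ((⊤ : Subgroup G).lowerCentralSeries c) = (⊤ : Subgroup H).lowerCentralSeries c := by
  induction c with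
  | zero =>
    simp only [Subgroup.lowerCentralSeries_zero]
    exact Subgroup.map_top_of_surjective f hf
  | succ c ih =>
    rw [lcs_succ_comm, lcs_succ_comm, ← ih, ← Subgroup.map_top_of_surjective f hf]
    exact Subgroup.map_commutator _ _ f

section TN
variable (n r : ℕ)

/-- the canonical projection `FreeGroup (Fin n) → TildeNil n r` -/
def tnProj : FreeGroup (Fin n) →* TildeNil n r :=
  (QuotientGroup.mk' (Subgroup.normalClosure
    (Set.range fun i : Fin n => nilGen n r i ^ 2))).comp
    (QuotientGroup.mk' ((⊤ : Subgroup (FreeGroup (Fin n))).lowerCentralSeries r))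

theorem tnProj_surjective : Function.Surjective (tnProj n r) :=
  (QuotientGroup.mk'_surjective _).comp (QuotientGroup.mk'_surjective _)

theorem tnGen_closure : Subgroup.closure (Set.range (tnGen n r)) = ⊤ := by
  have h1 : Subgroup.closure (Set.range FreeGroup.of) = (⊤ : Subgroup (FreeGroup (Fin n))) :=
    FreeGroup.closure_range_of (Fin n)
  have h2 : Set.range (tnGen n r) = (tnProj n r) '' Set.range FreeGroup.of := by
    rw [← Set.range_comp]
    rfl
  rw [h2, ← MonoidHom.map_closure, h1]
  exact Subgroup.map_top_of_surjective _ (tnProj_surjective n r)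

theorem tnLcs_bot : (⊤ : Subgroup (TildeNil n r)).lowerCentralSeries r = ⊥ := by
  rw [← lcs_map_surjective (tnProj n r) (tnProj_surjective n r) r]
  rw [Subgroup.map_eq_bot_iff]
  intro g hg
  show tnProj n r g = 1
  have h1 : (QuotientGroup.mk' ((⊤ : Subgroup (FreeGroup (Fin n))).lowerCentralSeries r)) g = 1 := by
    rw [QuotientGroup.mk'_apply]
    exact (QuotientGroup.eq_one_iff _).mpr hg
  show (QuotientGroup.mk' _) ((QuotientGroup.mk' _) g) = 1
  rw [h1, map_one]

theorem tnGen_sq (i : Fin n) : tnGen n r i ^ 2 = 1 := by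
  show (QuotientGroup.mk' (Subgroup.normalClosure
    (Set.range fun i : Fin n => nilGen n r i ^ 2))) (nilGen n r i) ^ 2 = 1
  rw [← map_pow, QuotientGroup.mk'_apply]
  exact (QuotientGroup.eq_one_iff _).mpr
    (Subgroup.subset_normalClosure ⟨i, rfl⟩)

theorem tnGen_inv (i : Fin n) : (tnGen n r i)⁻¹ = tnGen n r i := by
  have h := tnGen_sq n r i
  rw [pow_two] at h
  exact inv_eq_of_mul_eq_one_left h

end TN

theorem zpow_of_sq_one {G : Type*} [Group G] {y : G} (h : y ^ 2 = 1) (k : ℤ) :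
    y ^ k = 1 ∨ y ^ k = y := by
  have h2 : y ^ (2 : ℤ) = 1 := by
    rw [show (2 : ℤ) = 1 + 1 from rfl, zpow_add, zpow_one, ← pow_two, h]
  rcases Int.even_or_odd k with ⟨m, hm⟩ | ⟨m, hm⟩
  · left
    rw [hm, ← two_mul, zpow_mul, h2, one_zpow]
  · right
    rw [hm, zpow_add, zpow_one, zpow_mul, h2, one_zpow, one_mul]

/-- Main upper bound: every element of `Ñ_{n,r}` is a product of `2n` palindromes. -/
theorem tn_isPalProd (n r : ℕ) (hr : 1 ≤ r) (g : TildeNil n r) :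
    IsPalProd (tnGen n r) (2 * n) g := by
  set X := tnGen n r with hX
  have hgen := tnGen_closure n r
  have hbot := tnLcs_bot n r
  obtain ⟨k, u, rfl⟩ := nilpotent_prod_form X hgen hr hbot g
  apply isPalProd_blocks
  intro i
  have hsq := tnGen_sq n r i
  have hinv : (X i)⁻¹ = X i := tnGen_inv n r i
  have hblock : X i ^ k i * ⁅X i, u i⁆ = (X i ^ (k i + 1)) * (u i * X i * (u i)⁻¹) := by
    rw [commutatorElement_def, hinv, zpow_add, zpow_one]
    group
  rw [hblock]
  have hpal1 : IsPalindrome X (X i ^ (k i + 1)) := by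
    rcases zpow_of_sq_one hsq (k i + 1) with h | h
    · rw [h]; exact isPalindrome_one X
    · rw [h]; exact isPalindrome_gen X i
  have hpal2 : IsPalindrome X (u i * X i * (u i)⁻¹) :=
    isPalindrome_conj X (tnGen_inv n r) (u i) (exists_word X hgen (u i)) i
  refine ⟨![X i ^ (k i + 1), u i * X i * (u i)⁻¹], ?_, ?_⟩
  · intro j
    fin_cases j
    · exact hpal1
    · exact hpal2
  · simp [List.ofFn_succ]

/-- For `n ≥ 2` and `r ≥ 2`, `n ≤ pw(Ñ_{n,r}, Y) ≤ 2n`. -/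
theorem pw_tildeNil_bounds (n r : ℕ) (hn : 2 ≤ n) (hr : 2 ≤ r) :
    (n : ℕ∞) ≤ palWidth (tnGen n r) ∧ palWidth (tnGen n r) ≤ ((2 * n : ℕ) : ℕ∞) := by
  set X := tnGen n r with hX
  constructor
  · -- lower bound
    -- the homomorphism to (Z/2)^n
    set A := Multiplicative (Fin n → ZMod 2) with hA
    have hAsq : ∀ a : A, a * a = 1 := by
      intro a
      have h : Multiplicative.toAdd (a * a) = Multiplicative.toAdd (1 : A) := by
        rw [toAdd_mul, toAdd_one]
        funext j
        exact (by decide : ∀ t : ZMod 2, t + t = 0) _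
      exact Multiplicative.toAdd.injective h
    set base : FreeGroup (Fin n) →* A :=
      FreeGroup.lift fun i => Multiplicative.ofAdd (Pi.single i 1) with hbase
    have h₁ : (⊤ : Subgroup (FreeGroup (Fin n))).lowerCentralSeries r ≤ base.ker := by
      refine le_trans ((⊤ : Subgroup (FreeGroup (Fin n))).lowerCentralSeries_antitone (by omega : 1 ≤ r)) ?_
      rw [Subgroup.top_lowerCentralSeries_one]
      exact Abelianization.commutator_subset_ker base
    set φ₁ : FreeNilpotent n r →* A := QuotientGroup.lift _ base h₁ with hφ₁
    have hφ₁gen : ∀ i, φ₁ (nilGen n r i) = Multiplicative.ofAdd (Pi.single i 1) := by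
      intro i
      show base (FreeGroup.of i) = _
      simp [hbase]
    have h₂ : Subgroup.normalClosure (Set.range fun i : Fin n => nilGen n r i ^ 2) ≤ φ₁.ker := by
      refine Subgroup.normalClosure_le_normal ?_
      rintro _ ⟨i, rfl⟩
      show φ₁ (nilGen n r i ^ 2) = 1
      rw [map_pow, hφ₁gen, pow_two]
      exact hAsq _
    set φ : TildeNil n r →* A := QuotientGroup.lift _ φ₁ h₂ with hφ
    have hφgen : ∀ i, φ (X i) = Multiplicative.ofAdd (Pi.single i 1) := by
      intro i
      show φ₁ (nilGen n r i) = _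
      exact hφ₁gen i
    set g₀ : TildeNil n r := (List.ofFn fun i => X i).prod with hg₀
    have hφg₀ : Multiplicative.toAdd (φ g₀) = fun _ => (1 : ZMod 2) := by
      rw [hg₀, map_list_prod, List.map_ofFn]
      have h2 : (List.ofFn (⇑φ ∘ X)).prod = ∏ i, φ (X i) := List.prod_ofFn
      rw [h2, toAdd_prod]
      have h3 : ∀ i : Fin n, Multiplicative.toAdd (φ (X i)) = Pi.single i (1 : ZMod 2) := by
        intro i; rw [hφgen]; rfl
      rw [Finset.sum_congr rfl fun i _ => h3 i]
      exact Finset.univ_sum_single (fun _ => (1 : ZMod 2))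
    have hφpal : ∀ p : TildeNil n r, IsPalindrome X p →
        φ p = 1 ∨ ∃ i, φ p = Multiplicative.ofAdd (Pi.single i 1) := by
      intro p hp
      rcases pal_image X hAsq φ hp with h | ⟨i, h⟩
      · exact Or.inl h
      · exact Or.inr ⟨i, by rw [h, hφgen]⟩
    have hlow : ∀ m : ℕ, IsPalProd X m g₀ → n ≤ m := fun m hm =>
      count_lb X φ hφpal hφg₀ hm
    have hlen : (n : ℕ∞) ≤ palLength X g₀ := by
      refine le_sInf ?_
      rintro b ⟨m, rfl, hm⟩
      exact_mod_cast hlow m hm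
    exact le_trans hlen (le_iSup (fun g => palLength X g) g₀)
  · -- upper bound
    refine iSup_le fun g => ?_
    refine sInf_le ?_
    exact ⟨2 * n, rfl, tn_isPalProd n r (by omega) g⟩
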